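/- Let θ ∈ (0, π) and define y₁(x) := cos(θ⌊x⌋)(x - ⌊x⌋) + [cos(θ⌊x⌋)(cos θ - 1) + sin(θ⌊x⌋) sin θ] / (2(1 - cos θ)). Then y₁ is continuous on ℝ (in particular at every integer) and satisfies the ultra-discrete equation y₁(x+1) + y₁(x-1) = 2 cos θ · y₁(x) for all x ∈ ℝ. -/

import Mathlib

/-- The real part of the formal complex solution
`Y(x) = e^{iθ⌊x⌋}(x - ⌊x⌋ + 1/(e^{iθ} - 1))`. -/
noncomputable def y1 (θ : ℝ) (x : ℝ) : ℝ :=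
  Real.cos (θ * ⌊x⌋) * (x - ⌊x⌋) +
    (Real.cos (θ * ⌊x⌋) * (Real.cos θ - 1) + Real.sin (θ * ⌊x⌋) * Real.sin θ) /
      (2 * (1 - Real.cos θ))

/-- For `θ ∈ (0, π)`, `y₁` is continuous on ℝ and satisfies the ultra-discrete
equation `y₁(x+1) + y₁(x-1) = 2 cos θ · y₁(x)`. -/
theorem stmt19 (θ : ℝ) (hθ : θ ∈ Set.Ioo 0 Real.pi) :
    Continuous (y1 θ) ∧
    ∀ x : ℝ, y1 θ (x + 1) + y1 θ (x - 1) = 2 * Real.cos θ * y1 θ x := by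
  obtain ⟨hθ0, hθπ⟩ := hθ
  have hc : Real.cos θ < 1 := by
    have := Real.cos_lt_cos_of_nonneg_of_le_pi le_rfl hθπ.le hθ0
    simpa using this
  have hD : (2 : ℝ) * (1 - Real.cos θ) ≠ 0 := by
    have : (0:ℝ) < 1 - Real.cos θ := by linarith
    positivity
  constructor
  · -- continuity via comp_fract
    set f : ℝ → ℝ → ℝ := fun x t =>
      Real.cos (θ * (x - t)) * t +
        (Real.cos (θ * (x - t)) * (Real.cos θ - 1) + Real.sin (θ * (x - t)) * Real.sin θ) /
          (2 * (1 - Real.cos θ)) with hf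
    have heq : ∀ x : ℝ, y1 θ x = f x (Int.fract (id x)) := by
      intro x
      simp only [hf, y1, id, Int.fract]
      ring_nf
    have h0 : ∀ x : ℝ, f x 0 = f x 1 := by
      intro x
      simp only [hf]
      have h1 : θ * (x - 1) = θ * x - θ := by ring
      rw [h1, Real.cos_sub, Real.sin_sub]
      have hD' : 1 - Real.cos θ ≠ 0 := (by linarith : (0:ℝ) < 1 - Real.cos θ).ne'
      rw [sub_zero]
      field_simp
      linear_combination Real.cos (θ * x) * Real.sin_sq_add_cos_sq θ
    have : Continuous fun x : ℝ => f x (Int.fract (id x)) := by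
      apply ContinuousOn.comp_fract _ continuous_id h0
      apply Continuous.continuousOn
      simp only [hf, Function.uncurry]
      fun_prop
    simpa only [← heq] using this
  · intro x
    have h1 : (⌊x + 1⌋ : ℤ) = ⌊x⌋ + 1 := Int.floor_add_one x
    have h2 : (⌊x - 1⌋ : ℤ) = ⌊x⌋ - 1 := by
      simp [Int.floor_sub_one x]
    simp only [y1, h1, h2]
    push_cast
    have e1 : θ * (↑⌊x⌋ + 1) = θ * ⌊x⌋ + θ := by ring
    have e2 : θ * (↑⌊x⌋ - 1) = θ * ⌊x⌋ - θ := by ring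
    rw [e1, e2, Real.cos_add, Real.sin_add, Real.cos_sub, Real.sin_sub]
    field_simp
    ring
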